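/- Let $\Lambda$ be a lattice in a Euclidean space $V$, let $t, w \in V$, and let $\sigma > 0$. Define $\rho_\sigma(x) = \exp(-\pi \|x\|^2/\sigma^2)$ and $\rho_\sigma(A) = \sum_{x \in A} \rho_\sigma(x)$ for countable sets $A$. Then $\rho_\sigma(\Lambda + t + w) + \rho_\sigma(\Lambda + t - w) \ge 2\,\rho_\sigma(w)\,\rho_\sigma(\Lambda + t)$. -/

import Mathlib

lemma aux_sumZ {ε : ℝ} (hε : 0 < ε) : Summable (fun n : ℤ => Real.exp (-ε * (n : ℝ) ^ 2)) := by
  have h1 : Summable (fun n : ℕ => Real.exp (-ε * (n : ℝ) ^ 2)) := by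
    refine Summable.of_nonneg_of_le (fun n => (Real.exp_pos _).le) (fun n => ?_)
      (summable_geometric_of_lt_one (Real.exp_pos (-ε)).le (Real.exp_lt_one_iff.mpr (by linarith)))
    rw [← Real.exp_nat_mul]
    apply Real.exp_le_exp.mpr
    have : (n : ℝ) ≤ (n:ℝ)^2 := by
      rcases Nat.eq_zero_or_pos n with h | h
      · simp [h]
      · have h1 : (1:ℝ) ≤ (n:ℝ) := by exact_mod_cast h
        nlinarith
    nlinarith
  refine (summable_int_iff_summable_nat_and_neg).mpr ⟨?_, ?_⟩ <;> simpa using h1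

lemma aux_sumFin {ε : ℝ} (hε : 0 < ε) : ∀ n : ℕ,
    Summable (fun m : Fin n → ℤ => Real.exp (-ε * ∑ i, (m i : ℝ) ^ 2)) := by
  intro n
  induction n with
  | zero =>
    apply summable_of_finite_support
    exact Set.Finite.subset (Set.finite_univ) (Set.subset_univ _)
  | succ n ih =>
    rw [← (Fin.consEquiv (fun _ : Fin (n+1) => ℤ)).summable_iff]
    have key : ∀ p : ℤ × (Fin n → ℤ),
        Real.exp (-ε * ∑ i, ((Fin.consEquiv (fun _ : Fin (n+1) => ℤ) p) i : ℝ) ^ 2)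
        = Real.exp (-ε * (p.1:ℝ)^2) * Real.exp (-ε * ∑ i, (p.2 i : ℝ)^2) := by
      intro p
      rw [← Real.exp_add]
      congr 1
      simp only [Fin.consEquiv, Equiv.coe_fn_mk, Fin.sum_univ_succ, Fin.cons_zero, Fin.cons_succ]
      ring
    refine Summable.congr ?_ (fun p => (key p).symm)
    exact (aux_sumZ hε).mul_of_nonneg ih (fun _ => (Real.exp_pos _).le) (fun _ => (Real.exp_pos _).le)

lemma aux_sumPi {ι : Type*} [Fintype ι] {ε : ℝ} (hε : 0 < ε) :
    Summable (fun m : ι → ℤ => Real.exp (-ε * ∑ i, (m i : ℝ) ^ 2)) := by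
  classical
  let e : (Fin (Fintype.card ι) → ℤ) ≃ (ι → ℤ) :=
    Equiv.arrowCongr (Fintype.equivFin ι).symm (Equiv.refl ℤ)
  rw [← e.summable_iff]
  refine (aux_sumFin hε (Fintype.card ι)).congr (fun m => ?_)
  congr 1
  rw [Fintype.sum_equiv (Fintype.equivFin ι) (fun i => ((e m i : ℝ))^2) (fun j => ((m j : ℝ))^2)
    (fun i => by simp [e, Equiv.arrowCongr])]

lemma aux_sumLattice {V : Type*} [NormedAddCommGroup V] [NormedSpace ℝ V]
    [FiniteDimensional ℝ V] (Λ : Submodule ℤ V) [DiscreteTopology Λ]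
    {ε : ℝ} (hε : 0 < ε) :
    Summable (fun ℓ : Λ => Real.exp (-ε * ‖(ℓ : V)‖ ^ 2)) := by
  classical
  set E := Submodule.span ℝ (Λ : Set V) with hE
  let f := E.subtype
  let L₀ : Submodule ℤ E := Λ.comap (f.restrictScalars ℤ)
  have h_img : f '' L₀ = Λ := by
    rw [← LinearMap.coe_restrictScalars ℤ f, ← Submodule.map_coe (f.restrictScalars ℤ),
      Submodule.map_comap_eq_self]
    exact fun x hx => LinearMap.mem_range.mpr ⟨⟨x, Submodule.subset_span hx⟩, rfl⟩
  have hdisc : DiscreteTopology L₀ := by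
    refine DiscreteTopology.preimage_of_continuous_injective (Λ : Set V) ?_
      (Submodule.injective_subtype _)
    exact LinearMap.continuous_of_finiteDimensional f
  have hzl : IsZLattice ℝ L₀ := ⟨by
    rw [← (Submodule.map_injective_of_injective (Submodule.injective_subtype _)).eq_iff,
      Submodule.map_span, Submodule.map_top, Submodule.range_subtype, h_img]⟩
  have hfin : Module.Finite ℤ L₀ := ZLattice.module_finite ℝ L₀
  have hfree : Module.Free ℤ L₀ := ZLattice.module_free ℝ L₀
  let ι := Module.Free.ChooseBasisIndex ℤ L₀
  let b : Module.Basis ι ℤ L₀ := Module.Free.chooseBasis ℤ L₀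
  let c : Module.Basis ι ℝ E := b.ofZLatticeBasis ℝ L₀
  let eΛ : L₀ ≃ Λ :=
    { toFun := fun x => ⟨(x.1 : V), x.2⟩
      invFun := fun ℓ => ⟨⟨(ℓ : V), Submodule.subset_span ℓ.2⟩, ℓ.2⟩
      left_inv := fun x => rfl
      right_inv := fun ℓ => rfl }
  let g : (ι → ℤ) ≃ Λ := (b.equivFun.toEquiv.symm).trans eΛ
  rw [← g.summable_iff]
  have hnorm : ∀ x : L₀, ‖((eΛ x : Λ) : V)‖ = ‖(x : E)‖ := fun x => rfl
  rcases isEmpty_or_nonempty ι with hι | hι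
  · exact .of_finite
  · let T := (c.equivFun.toLinearMap).toContinuousLinearMap
    set C := ‖T‖ + 1 with hC
    have hCpos : 0 < C := by positivity
    have hcoord : ∀ (x : L₀) (i : ι), |((b.repr x i : ℤ) : ℝ)| ≤ C * ‖(x : E)‖ := by
      intro x i
      have h1 : c.equivFun (x : E) i = ((b.repr x i : ℤ) : ℝ) := by
        rw [Module.Basis.equivFun_apply]
        exact b.ofZLatticeBasis_repr_apply ℝ L₀ x i
      calc |((b.repr x i : ℤ) : ℝ)| = ‖c.equivFun (x : E) i‖ := by rw [h1]; simp
        _ ≤ ‖c.equivFun (x : E)‖ := norm_le_pi_norm _ i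
        _ = ‖T (x : E)‖ := rfl
        _ ≤ ‖T‖ * ‖(x : E)‖ := T.le_opNorm _
        _ ≤ C * ‖(x : E)‖ := by
            have := norm_nonneg (x : E)
            nlinarith [norm_nonneg T]
    set n := Fintype.card ι with hn
    have hnpos : 0 < (n : ℝ) := by
      have := Fintype.card_pos (α := ι)
      exact_mod_cast this
    set ε' := ε / (C ^ 2 * n) with hε'
    have hε'pos : 0 < ε' := by positivity
    refine Summable.of_nonneg_of_le (fun m => (Real.exp_pos _).le) (fun m => ?_) (aux_sumPi hε'pos)
    simp only [Function.comp]
    apply Real.exp_le_exp.mpr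
    set x : L₀ := b.equivFun.symm m with hx
    have hrepr : ∀ i, b.repr x i = m i := by
      intro i
      have : b.equivFun x = m := b.equivFun.apply_symm_apply m
      rw [← this, Module.Basis.equivFun_apply]
    have hgm : ‖((g m : Λ) : V)‖ = ‖(x : E)‖ := rfl
    rw [hgm]
    have hsq : ∀ i, ((m i : ℝ)) ^ 2 ≤ (C * ‖(x : E)‖) ^ 2 := by
      intro i
      have h := hcoord x i
      rw [hrepr i] at h
      have := abs_nonneg ((m i : ℝ))
      nlinarith [sq_abs ((m i : ℝ))]
    have hsum : ∑ i, ((m i : ℝ)) ^ 2 ≤ (n : ℝ) * (C * ‖(x : E)‖) ^ 2 := by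
      calc ∑ i, ((m i : ℝ)) ^ 2 ≤ ∑ _i : ι, (C * ‖(x : E)‖) ^ 2 :=
            Finset.sum_le_sum (fun i _ => hsq i)
        _ = (n : ℝ) * (C * ‖(x : E)‖) ^ 2 := by
            rw [Finset.sum_const, Finset.card_univ, nsmul_eq_mul, hn]
    have hcancel : ε' * (C ^ 2 * (n : ℝ)) = ε := by
      rw [hε']
      field_simp
    have hSnn : (0:ℝ) ≤ ∑ i, ((m i : ℝ)) ^ 2 :=
      Finset.sum_nonneg (fun i _ => sq_nonneg _)
    have hfin2 : ε' * (∑ i, ((m i : ℝ)) ^ 2) ≤ ε * ‖(x : E)‖ ^ 2 := by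
      calc ε' * (∑ i, ((m i : ℝ)) ^ 2) ≤ ε' * ((n : ℝ) * (C * ‖(x : E)‖) ^ 2) := by nlinarith
        _ = ε * ‖(x : E)‖ ^ 2 := by rw [← hcancel]; ring
    linarith



/-- The Gaussian function `ρ_σ(x) = exp(-π ‖x‖²/σ²)`. -/
noncomputable def gaussFun {V : Type*} [NormedAddCommGroup V] (σ : ℝ) (x : V) : ℝ :=
  Real.exp (-Real.pi * ‖x‖ ^ 2 / σ ^ 2)

/-- For a lattice `Λ` in a Euclidean space `V`, `t, w ∈ V` and
`σ > 0`, `ρ_σ(Λ + t + w) + ρ_σ(Λ + t - w) ≥ 2 ρ_σ(w) ρ_σ(Λ + t)`. -/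
theorem stmt10 {V : Type*} [NormedAddCommGroup V] [InnerProductSpace ℝ V]
    [FiniteDimensional ℝ V]
    (Λ : Submodule ℤ V) [DiscreteTopology Λ] (t w : V) (σ : ℝ) (hσ : 0 < σ) :
    2 * gaussFun σ w * ∑' ℓ : Λ, gaussFun σ ((ℓ : V) + t) ≤
      (∑' ℓ : Λ, gaussFun σ ((ℓ : V) + t + w)) +
        ∑' ℓ : Λ, gaussFun σ ((ℓ : V) + t - w) := by
  have hσ2 : (0:ℝ) < σ ^ 2 := by positivity
  have S : ∀ u : V, Summable (fun ℓ : Λ => gaussFun σ ((ℓ : V) + u)) := by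
    intro u
    have hε : 0 < Real.pi / (2 * σ ^ 2) := by positivity
    refine Summable.of_nonneg_of_le (fun ℓ => (Real.exp_pos _).le) (fun ℓ => ?_)
      ((aux_sumLattice Λ hε).mul_left (Real.exp (Real.pi * ‖u‖ ^ 2 / σ ^ 2)))
    rw [gaussFun, ← Real.exp_add]
    apply Real.exp_le_exp.mpr
    have h1 : ‖(ℓ:V)‖ ≤ ‖(ℓ:V) + u‖ + ‖u‖ := by
      simpa using norm_add_le ((ℓ:V) + u) (-u)
    have h3 : ‖(ℓ:V)‖ ^ 2 ≤ 2 * ‖(ℓ:V) + u‖ ^ 2 + 2 * ‖u‖ ^ 2 := by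
      have h2 := pow_le_pow_left₀ (norm_nonneg (ℓ:V)) h1 2
      nlinarith [sq_nonneg (‖(ℓ:V) + u‖ - ‖u‖)]
    have e1 : -Real.pi * ‖(ℓ:V) + u‖ ^ 2 / σ ^ 2
        = (Real.pi / σ ^ 2) * (-‖(ℓ:V) + u‖ ^ 2) := by ring
    have e2 : Real.pi * ‖u‖ ^ 2 / σ ^ 2 + -(Real.pi / (2 * σ ^ 2)) * ‖(ℓ:V)‖ ^ 2
        = (Real.pi / σ ^ 2) * (‖u‖ ^ 2 - ‖(ℓ:V)‖ ^ 2 / 2) := by ring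
    rw [e1, e2]
    apply mul_le_mul_of_nonneg_left _ (by positivity)
    linarith
  have pt : ∀ x : V, 2 * gaussFun σ w * gaussFun σ x
      ≤ gaussFun σ (x + w) + gaussFun σ (x - w) := by
    intro x
    have hpar : ‖x + w‖ ^ 2 + ‖x - w‖ ^ 2 = 2 * ‖x‖ ^ 2 + 2 * ‖w‖ ^ 2 := by
      have h1 := norm_add_sq_real x w
      have h2 := norm_sub_sq_real x w
      linarith
    set a := -Real.pi * ‖x + w‖ ^ 2 / σ ^ 2 with ha
    set b := -Real.pi * ‖x - w‖ ^ 2 / σ ^ 2 with hb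
    have hab : -Real.pi * ‖w‖ ^ 2 / σ ^ 2 + -Real.pi * ‖x‖ ^ 2 / σ ^ 2 = (a + b) / 2 := by
      rw [ha, hb]
      linear_combination (Real.pi / (2 * σ ^ 2)) * hpar
    have hgw : gaussFun σ w * gaussFun σ x = Real.exp ((a + b) / 2) := by
      rw [gaussFun, gaussFun, ← Real.exp_add, hab]
    have hu : Real.exp (a / 2) * Real.exp (a / 2) = Real.exp a := by
      rw [← Real.exp_add]; ring_nf
    have hv : Real.exp (b / 2) * Real.exp (b / 2) = Real.exp b := by
      rw [← Real.exp_add]; ring_nf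
    have huv : Real.exp (a / 2) * Real.exp (b / 2) = Real.exp ((a + b) / 2) := by
      rw [← Real.exp_add]; ring_nf
    have hsq := sq_nonneg (Real.exp (a / 2) - Real.exp (b / 2))
    show 2 * gaussFun σ w * gaussFun σ x ≤ Real.exp a + Real.exp b
    rw [mul_assoc, hgw]
    nlinarith [hu, hv, huv]
  have h1 : Summable (fun ℓ : Λ => gaussFun σ ((ℓ : V) + t + w)) :=
    (S (t + w)).congr (fun ℓ => by rw [add_assoc])
  have h2 : Summable (fun ℓ : Λ => gaussFun σ ((ℓ : V) + t - w)) :=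
    (S (t - w)).congr (fun ℓ => by rw [← add_sub_assoc])
  calc 2 * gaussFun σ w * ∑' ℓ : Λ, gaussFun σ ((ℓ : V) + t)
      = ∑' ℓ : Λ, 2 * gaussFun σ w * gaussFun σ ((ℓ : V) + t) := by rw [tsum_mul_left]
    _ ≤ ∑' ℓ : Λ, (gaussFun σ ((ℓ : V) + t + w) + gaussFun σ ((ℓ : V) + t - w)) := by
        refine Summable.tsum_le_tsum (fun ℓ => pt ((ℓ : V) + t)) ((S t).mul_left _) (h1.add h2)
    _ = (∑' ℓ : Λ, gaussFun σ ((ℓ : V) + t + w)) + ∑' ℓ : Λ, gaussFun σ ((ℓ : V) + t - w) :=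
        Summable.tsum_add h1 h2
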